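/- For each n ≥ 2, the theory T of the generic n-uniform hypergraph has distality rank exactly n: T is n-distal but not (n-1)-distal. -/

import Mathlib

open FirstOrder Language Set

namespace DR

/-- A partial type over `M` in variables indexed by `β`: a set of formulas, each with
finitely many parameters from `M`. -/
abbrev PType (L : FirstOrder.Language) (M : Type) (β : Type) : Type _ :=
  Set ((k : ℕ) × (L.Formula (β ⊕ Fin k) × (Fin k → M)))

variable {M : Type}

/-- Two `β`-tuples have the same type over the parameter set `A`. -/
def EqTp (L : FirstOrder.Language) [L.Structure M] (A : Set M) {β : Type} (f g : β → M) : Prop :=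
  ∀ (k : ℕ) (a : Fin k → M), (∀ i, a i ∈ A) →
    ∀ φ : L.Formula (β ⊕ Fin k), φ.Realize (Sum.elim f a) ↔ φ.Realize (Sum.elim g a)

/-- All parameters of formulas in `p` lie in `D`. -/
def paramsIn {L : FirstOrder.Language} {β : Type} (D : Set M) (p : PType L M β) : Prop :=
  ∀ x ∈ p, ∀ i, x.2.2 i ∈ D

/-- The set of parameters appearing in `p`. -/
def paramSet {L : FirstOrder.Language} {β : Type} (p : PType L M β) : Set M :=
  ⋃ x ∈ p, Set.range x.2.2

/-- The tuple `f` realizes every formula of `p`. -/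
def realizes {L : FirstOrder.Language} [L.Structure M] {β : Type} (f : β → M)
    (p : PType L M β) : Prop :=
  ∀ x ∈ p, x.2.1.Realize (Sum.elim f x.2.2)

/-- `p` is finitely satisfiable by tuples with coordinates in `A`. -/
def finSatIn (L : FirstOrder.Language) [L.Structure M] (A : Set M) {β : Type}
    (p : PType L M β) : Prop :=
  ∀ s : Finset ((k : ℕ) × (L.Formula (β ⊕ Fin k) × (Fin k → M))), ↑s ⊆ p →
    ∃ f : β → M, (∀ i, f i ∈ A) ∧ ∀ x ∈ s, x.2.1.Realize (Sum.elim f x.2.2)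

/-- `p` is a complete (consistent) type over the parameter set `D`. -/
def isCompleteOver (L : FirstOrder.Language) [L.Structure M] (D : Set M) {β : Type}
    (p : PType L M β) : Prop :=
  paramsIn D p ∧ finSatIn L Set.univ p ∧
    ∀ (k : ℕ) (φ : L.Formula (β ⊕ Fin k)) (d : Fin k → M), (∀ i, d i ∈ D) →
      (⟨k, φ, d⟩ ∈ p ∨ ⟨k, φ.not, d⟩ ∈ p)

/-- `p` (a type with parameters in `D`) is invariant over `A`: membership of a formula depends
only on the type over `A` of its parameter tuple. -/
def invariantOver (L : FirstOrder.Language) [L.Structure M] (A D : Set M) {β : Type}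
    (p : PType L M β) : Prop :=
  ∀ (k : ℕ) (φ : L.Formula (β ⊕ Fin k)) (d d' : Fin k → M), (∀ i, d' i ∈ D) →
    EqTp L A d d' → ⟨k, φ, d⟩ ∈ p → ⟨k, φ, d'⟩ ∈ p

/-- The restriction of `p` to formulas with parameters in `S`. -/
def restrictParams {L : FirstOrder.Language} {β : Type} (S : Set M) (p : PType L M β) :
    PType L M β :=
  {x ∈ p | ∀ i, x.2.2 i ∈ S}

/-- `S` is `κ⁺`-saturated (realizes consistent types over parameter sets of size `≤ κ`). -/
def satIn (L : FirstOrder.Language) [L.Structure M] (S : Set M) (κ : Cardinal) : Prop :=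
  ∀ (n : ℕ) (p : PType L M (Fin n)), paramsIn S p → Cardinal.mk ↥(paramSet p) ≤ κ →
    finSatIn L Set.univ p → ∃ f : Fin n → M, (∀ i, f i ∈ S) ∧ realizes f p

/-- Saturation of the whole structure below the cardinal `κ` (in all small variable contexts). -/
def SatAll (L : FirstOrder.Language) (M : Type) [L.Structure M] (κ : Cardinal) : Prop :=
  ∀ (β : Type) (p : PType L M β), Cardinal.mk β < κ → Cardinal.mk ↥(paramSet p) < κ →
    finSatIn L Set.univ p → ∃ f : β → M, realizes f p

/-- `M` is a monster model: saturated in its own cardinality. -/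
def IsMonster (L : FirstOrder.Language) (M : Type) [L.Structure M] : Prop :=
  SatAll L M (Cardinal.mk M)

/-- The restriction of an `n`-type in tuple-variables to the sub-tuple of variables
selected by `σ`. -/
def restrictVars {L : FirstOrder.Language} {α : Type} {m n : ℕ} (σ : Fin m → Fin n)
    (p : PType L M (Fin n × α)) : PType L M (Fin m × α) :=
  {x | ⟨x.1, x.2.1.relabel (Sum.map (Prod.map σ id) id), x.2.2⟩ ∈ p}

/-- An `n`-type over `D` is `m`-determined if it is completely determined by the `m`-types
it contains among its variables. -/
def mDetermined (L : FirstOrder.Language) [L.Structure M] {α : Type} {n : ℕ} (m : ℕ)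
    (D : Set M) (p : PType L M (Fin n × α)) : Prop :=
  ∀ q : PType L M (Fin n × α), isCompleteOver L D q →
    (∀ σ : Fin m → Fin n, StrictMono σ → restrictVars σ q = restrictVars σ p) → q = p

/-- Flatten a finite tuple of `α`-tuples into a single tuple. -/
def tupcat {α : Type} {N : ℕ} (c : Fin N → α → M) : Fin N × α → M := fun x => c x.1 x.2

/-- The sequence `b` of `α`-tuples is indiscernible over `A`. -/
def indiscOver (L : FirstOrder.Language) [L.Structure M] (A : Set M) {ι α : Type}
    [LinearOrder ι] (b : ι → α → M) : Prop :=
  ∀ (N : ℕ) (f g : Fin N → ι), StrictMono f → StrictMono g →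
    EqTp L A (tupcat fun j => b (f j)) (tupcat fun j => b (g j))

/-- `T = Th(M)` is NIP: every formula has finite alternation rank on every
indiscernible sequence. -/
def IsNIP (L : FirstOrder.Language) (M : Type) [L.Structure M] : Prop :=
  ∀ (β ι : Type) [LinearOrder ι] (b : ι → β → M), indiscOver L ∅ b →
    ∀ (k : ℕ) (φ : L.Formula (β ⊕ Fin k)) (d : Fin k → M),
      ∃ N : ℕ, ∀ f : Fin (N + 1) → ι, StrictMono f →
        ∃ j : Fin N,
          (φ.Realize (Sum.elim (b (f j.castSucc)) d) ↔ φ.Realize (Sum.elim (b (f j.succ)) d))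

/-- The (global) limit type of a sequence: formulas eventually satisfied along the sequence. -/
def limTp (L : FirstOrder.Language) [L.Structure M] {ι : Type} [LinearOrder ι] (b : ι → M) :
    PType L M (Fin 1) :=
  {x | ∃ i₀ : ι, ∀ i ≥ i₀, x.2.1.Realize (Sum.elim (fun _ : Fin 1 => b i) x.2.2)}

/-- The product `p₀ ⊗ ⋯ ⊗ p_{n-1}` (resolved left to right) of global types invariant
over `A`, in singleton variables. -/
def nProd (L : FirstOrder.Language) [L.Structure M] (A : Set M) :
    (n : ℕ) → (Fin n → PType L M (Fin 1)) → PType L M (Fin n)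
  | 0, _ => {x | x.2.1.Realize (Sum.elim (fun v : Fin 0 => v.elim0) x.2.2)}
  | n + 1, ps =>
    {x | ∀ a : M,
      realizes (fun _ : Fin 1 => a) (restrictParams (A ∪ Set.range x.2.2) (ps 0)) →
      ⟨x.1 + 1,
        x.2.1.relabel (Sum.elim
          (fun v : Fin (n + 1) =>
            (Fin.cases (Sum.inr (Fin.last x.1)) (fun i => Sum.inl i) v : Fin n ⊕ Fin (x.1 + 1)))
          (fun j : Fin x.1 => Sum.inr j.castSucc)),
        Fin.snoc x.2.2 a⟩ ∈ nProd L A n (fun i => ps i.succ)}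

/-- `c` is (the left part of) a Dedekind cut: a nonempty proper lower set with no maximum,
whose complement has no minimum. -/
def IsDedekindCut {ι : Type} [LinearOrder ι] (c : Set ι) : Prop :=
  c.Nonempty ∧ cᶜ.Nonempty ∧ (∀ i ∈ c, ∀ j, j ≤ i → j ∈ c) ∧
    (∀ i ∈ c, ∃ j ∈ c, i < j) ∧ (∀ i ∈ cᶜ, ∃ j ∈ cᶜ, j < i)

/-- The strict order on the index extended by points inserted at the cuts `Lc`. -/
def insLT {ι η : Type} [LinearOrder ι] [LinearOrder η] (Lc : η → Set ι) :
    (ι ⊕ η) → (ι ⊕ η) → Prop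
  | Sum.inl i, Sum.inl j => i < j
  | Sum.inl i, Sum.inr e => i ∈ Lc e
  | Sum.inr e, Sum.inl i => i ∉ Lc e
  | Sum.inr e, Sum.inr e' => Lc e ⊂ Lc e' ∨ (Lc e = Lc e' ∧ e < e')

/-- The sequence `b` remains indiscernible over `A` after inserting the tuples `a e` for
`e ∈ S`, each at the cut `Lc e`. -/
def InsertsInd (L : FirstOrder.Language) [L.Structure M] (A : Set M) {ι η α : Type}
    [LinearOrder ι] [LinearOrder η] (b : ι → α → M) (Lc : η → Set ι) (a : η → α → M)
    (S : Set η) : Prop :=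
  ∀ (N : ℕ) (f g : Fin N → ι ⊕ η),
    (∀ x y : Fin N, x < y → insLT Lc (f x) (f y)) →
    (∀ x y : Fin N, x < y → insLT Lc (g x) (g y)) →
    (∀ x e, f x = Sum.inr e → e ∈ S) → (∀ x e, g x = Sum.inr e → e ∈ S) →
    EqTp L A (tupcat fun j => Sum.elim b a (f j)) (tupcat fun j => Sum.elim b a (g j))

/-- The left part of the `t`-th cut of the partition `part`. -/
def cutSet {ι : Type} [LinearOrder ι] {n : ℕ} (part : ι → Fin (n + 1)) (t : Fin n) : Set ι :=
  {i | part i ≤ t.castSucc}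

/-- `part` is a Dedekind partition: a monotone surjection onto `Fin (n+1)` all of whose
`n` cuts are Dedekind. -/
def IsDedekindPartition {ι : Type} [LinearOrder ι] {n : ℕ} (part : ι → Fin (n + 1)) : Prop :=
  Monotone part ∧ (∀ t, ∃ i, part i = t) ∧ ∀ t : Fin n, IsDedekindCut (cutSet part t)

/-- The Dedekind partition `part` of the sequence `b` (indiscernible over `A`) is `m`-distal:
if every `m`-element subset of `(a 0, …, a (n-1))` inserts indiscernibly over `A` at the cuts,
then the whole tuple inserts. -/
def MDistalPartition (L : FirstOrder.Language) [L.Structure M] (A : Set M) {ι α : Type}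
    [LinearOrder ι] {n : ℕ} (b : ι → α → M) (part : ι → Fin (n + 1)) (m : ℕ) : Prop :=
  ∀ a : Fin n → α → M,
    (∀ S : Set (Fin n), S.ncard = m → InsertsInd L A b (cutSet part) a S) →
    InsertsInd L A b (cutSet part) a Set.univ

/-- The limit type `lim(c₀, …, c_{n-1})` of the cuts of the partition `part`, as a type
in `n` tuple-variables: formulas satisfied by all tuples close enough to the cuts. -/
def limCutTp (L : FirstOrder.Language) [L.Structure M] {ι α : Type} [LinearOrder ι] {n : ℕ}
    (b : ι → α → M) (part : ι → Fin (n + 1)) : PType L M (Fin n × α) :=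
  {x | ∃ lo hi : Fin n → ι,
    (∀ t, lo t ∈ cutSet part t) ∧ (∀ t, hi t ∉ cutSet part t) ∧
    ∀ it : Fin n → ι, (∀ t, lo t < it t ∧ it t < hi t) →
      x.2.1.Realize (Sum.elim (fun v => b (it v.1) v.2) x.2.2)}

/-- Two sequences have the same EM-type (over `∅`). -/
def SameEM (L : FirstOrder.Language) [L.Structure M] {ι κι α : Type} [LinearOrder ι]
    [LinearOrder κι] (b : ι → α → M) (c : κι → α → M) : Prop :=
  ∀ (N : ℕ) (f : Fin N → ι) (g : Fin N → κι), StrictMono f → StrictMono g →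
    EqTp L ∅ (tupcat fun j => b (f j)) (tupcat fun j => c (g j))

/-- The complete EM-type of the indiscernible sequence `b` is `(n, m)`-distal: every Dedekind
partition with `n` cuts of every sequence with the same EM-type is `m`-distal. -/
def EMdistalNM (L : FirstOrder.Language) [L.Structure M] {ι α : Type} [LinearOrder ι]
    (b : ι → α → M) (n m : ℕ) : Prop :=
  ∀ (κι : Type) [LinearOrder κι] (c : κι → α → M), SameEM L b c →
    ∀ part : κι → Fin (n + 1), IsDedekindPartition part → MDistalPartition L ∅ c part m

/-- The index of an `(m+1)`-skeleton: `ω + (ω* + ω) + ⋯ + (ω* + ω) + ω*` with `m` middle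
pieces of type `ω* + ω ≅ ℤ`. -/
abbrev SkelIdx (m : ℕ) : Type := (ℕ ⊕ₗ Lex (Fin m × ℤ)) ⊕ₗ ℕᵒᵈ

/-- The canonical partition of the skeleton index into its `m + 2` pieces. -/
def skelPart (m : ℕ) : SkelIdx m → Fin (m + 2) := fun x =>
  match ofLex x with
  | Sum.inl y =>
    match ofLex y with
    | Sum.inl _ => 0
    | Sum.inr tz => ((ofLex tz).1.succ).castSucc
  | Sum.inr _ => Fin.last (m + 1)

/-- The theory of `M`, with parameters for `A` named, is `m`-distal: every Dedekind
partition with `m + 1` cuts of every sequence indiscernible over `A` is `m`-distal over `A`. -/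
def TheoryMDistalOver (L : FirstOrder.Language) (M : Type) [L.Structure M] (A : Set M)
    (m : ℕ) : Prop :=
  ∀ (ι α : Type) [LinearOrder ι] (b : ι → α → M), indiscOver L A b →
    ∀ part : ι → Fin (m + 2), IsDedekindPartition part → MDistalPartition L A b part m

/-- `T = Th(M)` is stable: every indiscernible sequence is totally indiscernible. -/
def TotallyIndisc (L : FirstOrder.Language) (M : Type) [L.Structure M] : Prop :=
  ∀ (ι α : Type) [LinearOrder ι] (b : ι → α → M), indiscOver L ∅ b →
    ∀ (N : ℕ) (f g : Fin N → ι), Function.Injective f → Function.Injective g →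
      EqTp L ∅ (tupcat fun j => b (f j)) (tupcat fun j => b (g j))

/-- `T = Th(M)` is strongly `1`-distal. -/
def StronglyOneDistal (L : FirstOrder.Language) (M : Type) [L.Structure M] : Prop :=
  ∀ (ι α : Type) [LinearOrder ι] (b : ι → α → M) (c : Set ι), IsDedekindCut c →
    ∀ (D : Set M) (a : α → M), indiscOver L D b →
      InsertsInd L ∅ b (fun _ : PUnit => c) (fun _ => a) Set.univ →
      InsertsInd L D b (fun _ : PUnit => c) (fun _ => a) Set.univ

/-- The language with a single `n`-ary relation symbol. -/
def hyperLang (n : ℕ) : FirstOrder.Language where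
  Functions := fun _ => Empty
  Relations := fun k => PLift (k = n)

/-- The edge relation of a `hyperLang n`-structure. -/
def Edge {n : ℕ} {M : Type} [S : (hyperLang n).Structure M] (v : Fin n → M) : Prop :=
  Structure.RelMap (L := hyperLang n) (⟨rfl⟩ : (hyperLang n).Relations n) v

/-- `M` is a generic `(n+2)`-uniform hypergraph: an infinite `(n+2)`-uniform hypergraph
satisfying all extension axioms `φ_{s,t}`. -/
def IsGenericHypergraph (n : ℕ) (M : Type) [S : (hyperLang (n + 2)).Structure M] : Prop :=
  Infinite M ∧
  (∀ (v : Fin (n + 2) → M) (σ : Equiv.Perm (Fin (n + 2))), Edge v → Edge (v ∘ σ)) ∧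
  (∀ v : Fin (n + 2) → M, Edge v → Function.Injective v) ∧
  ∀ (s t : ℕ) (A : Fin s → Fin (n + 1) → M) (B : Fin t → Fin (n + 1) → M),
    (∀ i, Function.Injective (A i)) → (∀ j, Function.Injective (B j)) →
    (∀ i j, i ≠ j → Set.range (A i) ≠ Set.range (A j)) →
    (∀ i j, i ≠ j → Set.range (B i) ≠ Set.range (B j)) →
    (∀ i j, Set.range (A i) ≠ Set.range (B j)) →
    ∃ x : M, (∀ i, Edge (Fin.snoc (A i) x)) ∧ ∀ j, ¬ Edge (Fin.snoc (B j) x)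

variable {M : Type}

/-- The unique `A`-invariant global extension of a type `q` over the saturated model `S`. -/
def globExtT (L : FirstOrder.Language) [L.Structure M] (A S : Set M) {β : Type}
    (q : PType L M β) : PType L M β :=
  {x | ∀ d' : Fin x.1 → M, (∀ i, d' i ∈ S) → EqTp L A x.2.2 d' → ⟨x.1, x.2.1, d'⟩ ∈ q}

/-- The product `p ⊗ q` (resolved left to right) of a type `p` with an `A`-invariant type `q`
over the saturated model `S`: `φ(x, y, d) ∈ p ⊗ q` iff for every `a` realizing the restriction
of `p` to `A ∪ d`, the formula `φ(a, y, d)` lies in the `A`-invariant global extension of `q`. -/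
def prodT (L : FirstOrder.Language) [L.Structure M] (A S : Set M) {na nb : ℕ}
    (p : PType L M (Fin na)) (q : PType L M (Fin nb)) : PType L M (Fin na ⊕ Fin nb) :=
  {x | ∀ a : Fin na → M, realizes a (restrictParams (A ∪ Set.range x.2.2) p) →
    ⟨x.1 + na,
      x.2.1.relabel (Sum.elim
        (Sum.elim (fun i : Fin na => Sum.inr (Fin.natAdd x.1 i)) Sum.inl)
        (fun j : Fin x.1 => Sum.inr (Fin.castAdd na j))),
      Fin.append x.2.2 a⟩ ∈ globExtT L A S q}

/-- A Dedekind partition with `n` cuts of a sequence with the same EM-type as `b`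
which is `m`-distal. -/
structure DistalWitness (L : FirstOrder.Language) (M : Type) [L.Structure M] {ι α : Type}
    [LinearOrder ι] (b : ι → α → M) (n m : ℕ) : Type 1 where
  κι : Type
  [inst : LinearOrder κι]
  c : κι → α → M
  part : κι → Fin (n + 1)
  same : SameEM L b c
  ded : IsDedekindPartition part
  dist : MDistalPartition L ∅ c part m

/-! ### Auxiliary development -/

section Aux

variable {n : ℕ} [S : (hyperLang (n + 2)).Structure M]

lemma edge_comp_perm (hM : IsGenericHypergraph n M) (v : Fin (n + 2) → M)
    (σ : Equiv.Perm (Fin (n + 2))) : Edge (v ∘ σ) ↔ Edge v := by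
  constructor
  · intro h
    have h2 := hM.2.1 _ σ.symm h
    have : (v ∘ σ) ∘ σ.symm = v := by funext i; simp
    rwa [this] at h2
  · exact fun h => hM.2.1 v σ h

lemma not_edge_of_not_injective (hM : IsGenericHypergraph n M) (v : Fin (n + 2) → M)
    (hv : ¬ Function.Injective v) : ¬ Edge v := fun h => hv (hM.2.2.1 v h)

lemma edge_congr (hM : IsGenericHypergraph n M) {v w : Fin (n + 2) → M}
    (hv : Function.Injective v) (hw : Function.Injective w)
    (hr : Set.range v = Set.range w) : Edge v ↔ Edge w := by
  let σ : Equiv.Perm (Fin (n + 2)) :=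
    (Equiv.ofInjective w hw).trans ((Equiv.setCongr hr.symm).trans (Equiv.ofInjective v hv).symm)
  have hσ : ∀ k, v (σ k) = w k := by
    intro k
    simp only [σ, Equiv.trans_apply, Equiv.setCongr_apply]
    exact Equiv.apply_ofInjective_symm hv _
  rw [show w = v ∘ σ from funext fun k => (hσ k).symm, edge_comp_perm hM]

lemma range_snoc {k : ℕ} (w : Fin k → M) (x : M) :
    Set.range (Fin.snoc w x : Fin (k + 1) → M) = Set.range w ∪ {x} := by
  ext y
  constructor
  · rintro ⟨i, rfl⟩
    rcases Fin.eq_castSucc_or_eq_last i with ⟨j, rfl⟩ | rfl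
    · exact Or.inl ⟨j, by simp⟩
    · exact Or.inr (by simp)
  · rintro (⟨i, rfl⟩ | rfl)
    · exact ⟨i.castSucc, by simp⟩
    · exact ⟨Fin.last k, by simp⟩

lemma snoc_injective {k : ℕ} {w : Fin k → M} {x : M} (hw : Function.Injective w)
    (hx : ∀ i, w i ≠ x) : Function.Injective (Fin.snoc w x : Fin (k + 1) → M) := by
  intro i j h
  rcases Fin.eq_castSucc_or_eq_last i with ⟨i', rfl⟩ | rfl <;>
    rcases Fin.eq_castSucc_or_eq_last j with ⟨j', rfl⟩ | rfl <;>
    simp only [Fin.snoc_castSucc, Fin.snoc_last] at h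
  · exact congrArg Fin.castSucc (hw h)
  · exact absurd h (hx i')
  · exact absurd h.symm (hx j')
  · rfl

lemma exists_point [DecidableEq M] (hM : IsGenericHypergraph n M) (F : Finset M) (E : Finset M → Prop) :
    ∃ x, x ∉ F ∧ ∀ w : Fin (n + 1) → M, Function.Injective w → (∀ i, w i ∈ F) →
      (Edge (Fin.snoc w x) ↔ E (Finset.image w Finset.univ)) := by
  classical
  have tup : ∀ s : Finset M, s.card = n + 1 →
      ∃ t : Fin (n + 1) → M, Function.Injective t ∧ Finset.image t Finset.univ = s := by
    intro s hs
    refine ⟨fun i => (s.equivFin.symm (Fin.cast hs.symm i) : M), ?_, ?_⟩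
    · intro i j h
      have h2 := s.equivFin.symm.injective (Subtype.coe_injective h)
      exact Fin.cast_injective _ h2
    · ext a
      simp only [Finset.mem_image, Finset.mem_univ, true_and]
      constructor
      · rintro ⟨i, rfl⟩; exact (s.equivFin.symm _).2
      · intro ha
        refine ⟨Fin.cast hs (s.equivFin ⟨a, ha⟩), ?_⟩
        have h3 : Fin.cast hs.symm (Fin.cast hs (s.equivFin ⟨a, ha⟩)) = s.equivFin ⟨a, ha⟩ := rfl
        rw [h3, Equiv.symm_apply_apply]
  haveI : Infinite M := hM.1
  let Fc : Set M := ↑F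
  have hcompl : Fcᶜ.Infinite := F.finite_toSet.infinite_compl
  let jp : ℕ ↪ ↥(Fcᶜ) := Set.Infinite.natEmbedding _ hcompl
  let junk : Fin F.card × Fin (n + 1) → M := fun p => ((jp (finProdFinEquiv p)) : M)
  have junk_inj : Function.Injective junk := by
    intro p q h
    exact finProdFinEquiv.injective (Fin.val_injective (jp.injective (Subtype.coe_injective h)))
  have junk_notF : ∀ p, junk p ∉ F := by
    intro p hp
    exact (jp (finProdFinEquiv p)).2 (Finset.mem_coe.2 hp)
  let SS := F.powersetCard (n + 1)
  let I := ({s // s ∈ SS} ⊕ Fin F.card)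
  have scard : ∀ s : {s // s ∈ SS}, (s : Finset M).card = n + 1 :=
    fun s => (Finset.mem_powersetCard.1 s.2).2
  have ssub : ∀ s : {s // s ∈ SS}, (s : Finset M) ⊆ F :=
    fun s => (Finset.mem_powersetCard.1 s.2).1
  let ts : {s // s ∈ SS} → Fin (n + 1) → M := fun s => (tup (↑s) (scard s)).choose
  have ts_inj : ∀ s, Function.Injective (ts s) :=
    fun (s : {s // s ∈ SS}) => (tup (↑s) (scard s)).choose_spec.1
  have ts_img : ∀ s, Finset.image (ts s) Finset.univ = (s : Finset M) :=
    fun (s : {s // s ∈ SS}) => (tup (↑s) (scard s)).choose_spec.2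
  have ts_range : ∀ s : {s // s ∈ SS}, Set.range (ts s) = ((s : Finset M) : Set M) := by
    intro s
    rw [← ts_img s, Finset.coe_image, Finset.coe_univ, Set.image_univ]
  have ts_mem : ∀ (s : {s // s ∈ SS}) i, ts s i ∈ (s : Finset M) :=
    fun s i => (ts_img s) ▸ Finset.mem_image_of_mem _ (Finset.mem_univ i)
  let fEl : Fin F.card → M := fun k => (F.equivFin.symm k : M)
  let T : I → Fin (n + 1) → M := Sum.elim ts (fun k i => junk (k, i))
  let good : I → Prop := Sum.elim (fun s => E s)
    (fun k => ¬ Edge (Fin.snoc (fun i => junk (k, i)) (fEl k)))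
  have T_inj : ∀ i, Function.Injective (T i) := by
    rintro (s | k) i j h
    · exact ts_inj s h
    · have h2 := junk_inj h
      exact congrArg Prod.snd h2
  have T_range_ne : ∀ i j : I, i ≠ j → Set.range (T i) ≠ Set.range (T j) := by
    rintro (s | k) (s' | k') hne h
    · apply hne
      have := Finset.coe_injective ((ts_range s).symm.trans (h.trans (ts_range s')))
      exact congrArg Sum.inl (Subtype.ext this)
    · obtain ⟨i, hi⟩ : ts s 0 ∈ Set.range (T (Sum.inr k')) := h ▸ ⟨0, rfl⟩
      exact junk_notF (k', i)
        (by rw [show junk (k', i) = ts s 0 from hi]; exact ssub s (ts_mem s 0))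
    · obtain ⟨i', hi'⟩ : ts s' 0 ∈ Set.range (T (Sum.inr k)) := h ▸ ⟨0, rfl⟩
      exact junk_notF (k, i')
        (by rw [show junk (k, i') = ts s' 0 from hi']; exact ssub s' (ts_mem s' 0))
    · obtain ⟨i, hi⟩ : junk (k, 0) ∈ Set.range (T (Sum.inr k')) := h ▸ ⟨0, rfl⟩
      have h2 := junk_inj hi.symm
      exact hne (by rw [congrArg Sum.inr (congrArg Prod.fst h2)])
  let A' := {i : I // good i}
  let B' := {i : I // ¬ good i}
  let eA := (Fintype.equivFin A').symm
  let eB := (Fintype.equivFin B').symm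
  obtain ⟨x, hxA, hxB⟩ := hM.2.2.2 (Fintype.card A') (Fintype.card B')
    (fun k => T (eA k).1) (fun k => T (eB k).1)
    (fun k => T_inj _) (fun k => T_inj _)
    (fun i j hij => T_range_ne _ _
      (fun h => hij (eA.injective (Subtype.val_injective h))))
    (fun i j hij => T_range_ne _ _
      (fun h => hij (eB.injective (Subtype.val_injective h))))
    (fun i j => T_range_ne _ _ (fun h => (eB j).2 (h ▸ (eA i).2)))
  have hGood : ∀ i : I, good i → Edge (Fin.snoc (T i) x) := by
    intro i hi
    have h2 := hxA (eA.symm ⟨i, hi⟩)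
    rwa [Equiv.apply_symm_apply] at h2
  have hBad : ∀ i : I, ¬ good i → ¬ Edge (Fin.snoc (T i) x) := by
    intro i hi
    have h2 := hxB (eB.symm ⟨i, hi⟩)
    rwa [Equiv.apply_symm_apply] at h2
  have hxF : x ∉ F := by
    intro hxF
    set k := F.equivFin ⟨x, hxF⟩ with hk
    have hfEl : fEl k = x := by simp [fEl, hk]
    by_cases hE : Edge (Fin.snoc (fun i => junk (k, i)) x)
    · refine hBad (Sum.inr k) ?_ hE
      show ¬ ¬ Edge (Fin.snoc (fun i => junk (k, i)) (fEl k))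
      rw [hfEl]; exact not_not_intro hE
    · refine hE (hGood (Sum.inr k) ?_)
      show ¬ Edge (Fin.snoc (fun i => junk (k, i)) (fEl k))
      rw [hfEl]; exact hE
  refine ⟨x, hxF, ?_⟩
  intro w hw hwF
  have hscard : (Finset.image w Finset.univ).card = n + 1 := by
    rw [Finset.card_image_of_injective _ hw, Finset.card_univ, Fintype.card_fin]
  have hsmem : Finset.image w Finset.univ ∈ SS :=
    Finset.mem_powersetCard.2
      ⟨fun a ha => by
        obtain ⟨i, _, rfl⟩ := Finset.mem_image.1 ha
        exact hwF i, hscard⟩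
  set s : {s // s ∈ SS} := ⟨_, hsmem⟩ with hs
  have h1 : Edge (Fin.snoc w x) ↔ Edge (Fin.snoc (ts s) x) := by
    apply edge_congr hM
    · exact snoc_injective hw (fun i h => hxF (h ▸ hwF i))
    · exact snoc_injective (ts_inj s) (fun i h => hxF (h ▸ ssub s (ts_mem s i)))
    · rw [range_snoc, range_snoc, ts_range]
      congr 1
      show Set.range w = ((Finset.image w Finset.univ : Finset M) : Set M)
      rw [Finset.coe_image, Finset.coe_univ, Set.image_univ]
  rw [h1]
  by_cases hE : E (Finset.image w Finset.univ)
  · exact iff_of_true (hGood (Sum.inl s) hE) hE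
  · exact iff_of_false (hBad (Sum.inl s) hE) hE

end Aux

/-- Two tuples have the same quantifier-free pattern: equalities and edges. -/
def MatchT (m : ℕ) [St : (hyperLang (m + 2)).Structure M] {γ : Type} (u v : γ → M) : Prop :=
  (∀ i j, u i = u j ↔ v i = v j) ∧ ∀ w : Fin (m + 2) → γ, Edge (u ∘ w) ↔ Edge (v ∘ w)

section Aux2

variable {n : ℕ} [S : (hyperLang (n + 2)).Structure M]

lemma MatchT.symm {γ : Type} {u v : γ → M} (h : MatchT n u v) : MatchT n v u :=
  ⟨fun i j => (h.1 i j).symm, fun w => (h.2 w).symm⟩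

lemma MatchT.comp {γ δ : Type} {u v : γ → M} (h : MatchT n u v) (e : δ → γ) :
    MatchT n (u ∘ e) (v ∘ e) :=
  ⟨fun i j => h.1 (e i) (e j), fun w => h.2 (e ∘ w)⟩

lemma matchT_fin0 {γ : Type} {u v : γ → M} (h : MatchT n u v) (d : Fin 0 → M) :
    MatchT n (Sum.elim u d) (Sum.elim v d) := by
  constructor
  · rintro (i | i) (j | j)
    · exact h.1 i j
    · exact j.elim0
    · exact i.elim0
    · exact i.elim0
  · intro w
    have hc : ∀ k, ∃ i, w k = Sum.inl i := by
      intro k; cases hw : w k with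
      | inl i => exact ⟨i, rfl⟩
      | inr j => exact j.elim0
    choose c hc using hc
    have h1 : Sum.elim u d ∘ w = u ∘ c := by funext k; rw [Function.comp_apply, hc k]; rfl
    have h2 : Sum.elim v d ∘ w = v ∘ c := by funext k; rw [Function.comp_apply, hc k]; rfl
    rw [h1, h2]; exact h.2 c

lemma forth {γ : Type} [Fintype γ] (hM : IsGenericHypergraph n M) {u v : γ → M}
    (h : MatchT n u v) (x : M) :
    ∃ y : M, MatchT n (fun o : Option γ => o.elim x u) (fun o : Option γ => o.elim y v) := by
  classical
  by_cases hx : ∃ i, u i = x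
  · obtain ⟨i, hi⟩ := hx
    refine ⟨v i, ?_⟩
    have hu : (fun o : Option γ => o.elim x u) = u ∘ (fun o : Option γ => o.elim i id) := by
      funext o; cases o <;> simp [hi]
    have hv : (fun o : Option γ => o.elim (v i) v) = v ∘ (fun o : Option γ => o.elim i id) := by
      funext o; cases o <;> simp
    rw [hu, hv]
    exact h.comp _
  · push_neg at hx
    have hinj_iff : ∀ c : Fin (n + 1) → γ,
        Function.Injective (u ∘ c) ↔ Function.Injective (v ∘ c) := by
      intro c
      constructor <;> intro hc i j hij
      · exact hc (show u (c i) = u (c j) from (h.1 _ _).2 hij)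
      · exact hc ((h.1 _ _).1 hij)
    set F : Finset M := Finset.image v Finset.univ with hF
    set E : Finset M → Prop := fun s => ∃ c : Fin (n + 1) → γ,
      Function.Injective (v ∘ c) ∧ Finset.image (v ∘ c) Finset.univ = s ∧
        Edge (Fin.snoc (u ∘ c) x) with hEdef
    obtain ⟨y, hyF, hy⟩ := exists_point hM F E
    have hrange : ∀ c c' : Fin (n + 1) → γ,
        Finset.image (v ∘ c) Finset.univ = Finset.image (v ∘ c') Finset.univ →
        Set.range (u ∘ c) ⊆ Set.range (u ∘ c') := by
      intro c c' himg z hz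
      obtain ⟨j, rfl⟩ := hz
      have hmem : v (c j) ∈ Finset.image (v ∘ c') Finset.univ :=
        himg ▸ Finset.mem_image_of_mem _ (Finset.mem_univ j)
      obtain ⟨j', _, hj'⟩ := Finset.mem_image.1 hmem
      exact ⟨j', (h.1 (c' j') (c j)).2 hj'⟩
    have wd : ∀ c c' : Fin (n + 1) → γ, Function.Injective (v ∘ c) →
        Function.Injective (v ∘ c') →
        Finset.image (v ∘ c) Finset.univ = Finset.image (v ∘ c') Finset.univ →
        (Edge (Fin.snoc (u ∘ c) x) ↔ Edge (Fin.snoc (u ∘ c') x)) := by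
      intro c c' hc hc' himg
      apply edge_congr hM
      · exact snoc_injective ((hinj_iff c).2 hc) (fun i => hx (c i))
      · exact snoc_injective ((hinj_iff c').2 hc') (fun i => hx (c' i))
      · rw [range_snoc, range_snoc,
          Set.Subset.antisymm (hrange c c' himg) (hrange c' c himg.symm)]
    have hkey : ∀ c : Fin (n + 1) → γ,
        Edge (Fin.snoc (v ∘ c) y) ↔ Edge (Fin.snoc (u ∘ c) x) := by
      intro c
      by_cases hc : Function.Injective (v ∘ c)
      · have h1 := hy (v ∘ c) hc
          (fun i => by rw [hF]; exact Finset.mem_image_of_mem _ (Finset.mem_univ _))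
        rw [h1]
        constructor
        · rintro ⟨c', hc', himg, he⟩
          exact (wd c' c hc' hc himg).1 he
        · intro he; exact ⟨c, hc, rfl, he⟩
      · have hcv : ¬ Function.Injective (Fin.snoc (v ∘ c) y : Fin (n + 2) → M) :=
          fun hinj => hc (fun i j hij => Fin.castSucc_injective _
            (hinj (by simp only [Fin.snoc_castSucc]; exact hij)))
        have hcu : ¬ Function.Injective (Fin.snoc (u ∘ c) x : Fin (n + 2) → M) :=
          fun hinj => ((hinj_iff c).not.2 hc) (fun i j hij => Fin.castSucc_injective _
            (hinj (by simp only [Fin.snoc_castSucc]; exact hij)))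
        exact iff_of_false (not_edge_of_not_injective hM _ hcv)
          (not_edge_of_not_injective hM _ hcu)
    refine ⟨y, ?_, ?_⟩
    · rintro (_ | i) (_ | j)
      · simp
      · refine iff_of_false (fun hxy => hx j ?_) (fun hxy => hyF ?_)
        · exact (show x = u j from hxy).symm
        · rw [show y = v j from hxy]
          exact Finset.mem_image_of_mem _ (Finset.mem_univ j)
      · refine iff_of_false (fun hxy => hx i ?_) (fun hxy => hyF ?_)
        · exact (show u i = x from hxy)
        · rw [← show v i = y from hxy]
          exact Finset.mem_image_of_mem _ (Finset.mem_univ i)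
      · exact h.1 i j
    · intro w
      by_cases hw : ∃ k, w k = none
      · obtain ⟨k₀, hk₀⟩ := hw
        by_cases hw2 : ∃ k, k ≠ k₀ ∧ w k = none
        · obtain ⟨k₁, hk₁, hk₁n⟩ := hw2
          have hnu : ¬ Function.Injective ((fun o : Option γ => o.elim x u) ∘ w) := by
            intro hinj
            exact hk₁ (hinj (by simp only [Function.comp_apply, hk₀, hk₁n]))
          have hnv : ¬ Function.Injective ((fun o : Option γ => o.elim y v) ∘ w) := by
            intro hinj
            exact hk₁ (hinj (by simp only [Function.comp_apply, hk₀, hk₁n]))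
          exact iff_of_false (not_edge_of_not_injective hM _ hnu)
            (not_edge_of_not_injective hM _ hnv)
        · push_neg at hw2
          set σ := Equiv.swap k₀ (Fin.last (n + 1)) with hσ
          have hlast : w (σ (Fin.last (n + 1))) = none := by
            rw [hσ, Equiv.swap_apply_right]; exact hk₀
          have hcs : ∀ j : Fin (n + 1), w (σ j.castSucc) ≠ none := by
            intro j hj
            have h1 : σ j.castSucc = k₀ := by
              by_contra hne; exact (hw2 _ hne) hj
            have h2 : j.castSucc = Fin.last (n + 1) := by
              have := congrArg σ h1
              rwa [Equiv.swap_apply_self, hσ, Equiv.swap_apply_left] at this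
            exact absurd h2 (Fin.castSucc_lt_last j).ne
          let c : Fin (n + 1) → γ := fun j =>
            (w (σ j.castSucc)).get (Option.ne_none_iff_isSome.1 (hcs j))
          have hu : ((fun o : Option γ => o.elim x u) ∘ w) ∘ σ = Fin.snoc (u ∘ c) x := by
            funext i
            rcases Fin.eq_castSucc_or_eq_last i with ⟨j, rfl⟩ | rfl
            · simp only [Function.comp_apply, Fin.snoc_castSucc]
              rw [show w (σ j.castSucc) = some (c j) from (Option.some_get _).symm]
              rfl
            · simp only [Function.comp_apply, Fin.snoc_last]
              rw [hlast]
              rfl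
          have hv : ((fun o : Option γ => o.elim y v) ∘ w) ∘ σ = Fin.snoc (v ∘ c) y := by
            funext i
            rcases Fin.eq_castSucc_or_eq_last i with ⟨j, rfl⟩ | rfl
            · simp only [Function.comp_apply, Fin.snoc_castSucc]
              rw [show w (σ j.castSucc) = some (c j) from (Option.some_get _).symm]
              rfl
            · simp only [Function.comp_apply, Fin.snoc_last]
              rw [hlast]
              rfl
          calc Edge ((fun o : Option γ => o.elim x u) ∘ w)
              ↔ Edge (((fun o : Option γ => o.elim x u) ∘ w) ∘ σ) :=
                (edge_comp_perm hM _ σ).symm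
            _ ↔ Edge (Fin.snoc (u ∘ c) x) := by rw [hu]
            _ ↔ Edge (Fin.snoc (v ∘ c) y) := (hkey c).symm
            _ ↔ Edge (((fun o : Option γ => o.elim y v) ∘ w) ∘ σ) := by rw [hv]
            _ ↔ Edge ((fun o : Option γ => o.elim y v) ∘ w) := edge_comp_perm hM _ σ
      · push_neg at hw
        let c : Fin (n + 2) → γ := fun k => (w k).get (Option.ne_none_iff_isSome.1 (hw k))
        have hu : (fun o : Option γ => o.elim x u) ∘ w = u ∘ c := by
          funext k
          rw [Function.comp_apply, show w k = some (c k) from (Option.some_get _).symm]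
          rfl
        have hv : (fun o : Option γ => o.elim y v) ∘ w = v ∘ c := by
          funext k
          rw [Function.comp_apply, show w k = some (c k) from (Option.some_get _).symm]
          rfl
        rw [hu, hv]; exact h.2 c

lemma hyper_term_var {m : ℕ} {γ : Type} (t : (hyperLang m).Term γ) :
    ∃ i, t = FirstOrder.Language.Term.var i := by
  cases t with
  | var i => exact ⟨i, rfl⟩
  | func f _ => exact Empty.elim f

lemma ef (hM : IsGenericHypergraph n M) {γ : Type} [Fintype γ] :
    ∀ {l : ℕ} (φ : (hyperLang (n + 2)).BoundedFormula γ l) (u v : γ → M)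
      (xs ys : Fin l → M), MatchT n (Sum.elim u xs) (Sum.elim v ys) →
      (φ.Realize u xs ↔ φ.Realize v ys) := by
  intro l φ
  induction φ with
  | falsum => intro u v xs ys h; exact Iff.rfl
  | equal t₁ t₂ =>
    intro u v xs ys h
    obtain ⟨i₁, rfl⟩ := hyper_term_var t₁
    obtain ⟨i₂, rfl⟩ := hyper_term_var t₂
    show (Term.var i₁).realize (Sum.elim u xs) = (Term.var i₂).realize (Sum.elim u xs) ↔
      (Term.var i₁).realize (Sum.elim v ys) = (Term.var i₂).realize (Sum.elim v ys)
    exact h.1 i₁ i₂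
  | @rel l k R ts =>
    intro u v xs ys h
    obtain ⟨hk⟩ := R
    subst hk
    choose c hc using fun i => hyper_term_var (ts i)
    show Edge (fun i => (ts i).realize (Sum.elim u xs)) ↔
      Edge (fun i => (ts i).realize (Sum.elim v ys))
    have e1 : (fun i => (ts i).realize (Sum.elim u xs)) = Sum.elim u xs ∘ c := by
      funext i; rw [hc i]; rfl
    have e2 : (fun i => (ts i).realize (Sum.elim v ys)) = Sum.elim v ys ∘ c := by
      funext i; rw [hc i]; rfl
    rw [e1, e2]; exact h.2 c
  | imp φ ψ ihφ ihψ =>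
    intro u v xs ys h
    simp only [BoundedFormula.realize_imp]
    rw [ihφ _ _ _ _ h, ihψ _ _ _ _ h]
  | all φ ih =>
    intro u v xs ys h
    simp only [BoundedFormula.realize_all]
    constructor
    · intro hall y
      obtain ⟨x, hxy⟩ := forth hM (h.symm) y
      have hm := (hxy.symm).comp
        (Sum.elim (fun i : γ => some (Sum.inl i))
          (fun j : Fin _ => Fin.lastCases (none : Option (γ ⊕ Fin _))
            (fun j' => some (Sum.inr j')) j))
      have heq1 : (fun o : Option (γ ⊕ Fin _) => o.elim x (Sum.elim u xs)) ∘
          (Sum.elim (fun i : γ => some (Sum.inl i))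
            (fun j => Fin.lastCases none (fun j' => some (Sum.inr j')) j)) =
          Sum.elim u (Fin.snoc xs x) := by
        funext z
        rcases z with i | j
        · rfl
        · rcases Fin.eq_castSucc_or_eq_last j with ⟨j', rfl⟩ | rfl
          · simp [Fin.snoc_castSucc]
          · simp [Fin.snoc_last]
      have heq2 : (fun o : Option (γ ⊕ Fin _) => o.elim y (Sum.elim v ys)) ∘
          (Sum.elim (fun i : γ => some (Sum.inl i))
            (fun j => Fin.lastCases none (fun j' => some (Sum.inr j')) j)) =
          Sum.elim v (Fin.snoc ys y) := by
        funext z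
        rcases z with i | j
        · rfl
        · rcases Fin.eq_castSucc_or_eq_last j with ⟨j', rfl⟩ | rfl
          · simp [Fin.snoc_castSucc]
          · simp [Fin.snoc_last]
      rw [heq1, heq2] at hm
      exact (ih _ _ _ _ hm).1 (hall x)
    · intro hall x
      obtain ⟨y, hxy⟩ := forth hM h x
      have hm := hxy.comp
        (Sum.elim (fun i : γ => some (Sum.inl i))
          (fun j : Fin _ => Fin.lastCases (none : Option (γ ⊕ Fin _))
            (fun j' => some (Sum.inr j')) j))
      have heq1 : (fun o : Option (γ ⊕ Fin _) => o.elim x (Sum.elim u xs)) ∘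
          (Sum.elim (fun i : γ => some (Sum.inl i))
            (fun j => Fin.lastCases none (fun j' => some (Sum.inr j')) j)) =
          Sum.elim u (Fin.snoc xs x) := by
        funext z
        rcases z with i | j
        · rfl
        · rcases Fin.eq_castSucc_or_eq_last j with ⟨j', rfl⟩ | rfl
          · simp [Fin.snoc_castSucc]
          · simp [Fin.snoc_last]
      have heq2 : (fun o : Option (γ ⊕ Fin _) => o.elim y (Sum.elim v ys)) ∘
          (Sum.elim (fun i : γ => some (Sum.inl i))
            (fun j => Fin.lastCases none (fun j' => some (Sum.inr j')) j)) =
          Sum.elim v (Fin.snoc ys y) := by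
        funext z
        rcases z with i | j
        · rfl
        · rcases Fin.eq_castSucc_or_eq_last j with ⟨j', rfl⟩ | rfl
          · simp [Fin.snoc_castSucc]
          · simp [Fin.snoc_last]
      rw [heq1, heq2] at hm
      exact (ih _ _ _ _ hm).2 (hall y)

lemma match_eqTp (hM : IsGenericHypergraph n M) {β : Type} {u v : β → M}
    (h1 : ∀ i j, u i = u j ↔ v i = v j)
    (h2 : ∀ w : Fin (n + 2) → β, Edge (u ∘ w) ↔ Edge (v ∘ w)) :
    EqTp (hyperLang (n + 2)) (∅ : Set M) u v := by
  intro k a ha φ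
  cases k with
  | succ k => exact absurd (ha 0) (Set.notMem_empty _)
  | zero =>
    classical
    have hm0 : MatchT n (Sum.elim u a) (Sum.elim v a) := matchT_fin0 ⟨h1, h2⟩ a
    haveI : Fintype ↥((↑φ.freeVarFinset : Set (β ⊕ Fin 0))) :=
      (φ.freeVarFinset.finite_toSet).fintype
    have hsub : ↑φ.freeVarFinset ⊆ (↑φ.freeVarFinset : Set (β ⊕ Fin 0)) := subset_rfl
    have hu := BoundedFormula.realize_restrictFreeVar' (M := M) hsub
      (v := Sum.elim u a) (xs := (default : Fin 0 → M))
    have hv := BoundedFormula.realize_restrictFreeVar' (M := M) hsub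
      (v := Sum.elim v a) (xs := (default : Fin 0 → M))
    show BoundedFormula.Realize φ (Sum.elim u a) default ↔
      BoundedFormula.Realize φ (Sum.elim v a) default
    rw [← hu, ← hv]
    exact ef hM _ _ _ default default
      (matchT_fin0 (hm0.comp (Subtype.val : ↥(↑φ.freeVarFinset : Set (β ⊕ Fin 0)) → _))
        default)

lemma EqTp_symm {L : FirstOrder.Language} [L.Structure M] {A : Set M} {β : Type}
    {f g : β → M} (h : EqTp L A f g) : EqTp L A g f :=
  fun k a ha φ => (h k a ha φ).symm

lemma EqTp_trans {L : FirstOrder.Language} [L.Structure M] {A : Set M} {β : Type}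
    {f g h' : β → M} (h1 : EqTp L A f g) (h2 : EqTp L A g h') : EqTp L A f h' :=
  fun k a ha φ => (h1 k a ha φ).trans (h2 k a ha φ)

lemma insLT_irrefl {ι η : Type} [LinearOrder ι] [LinearOrder η] (Lc : η → Set ι)
    (x : ι ⊕ η) : ¬ insLT Lc x x := by
  cases x with
  | inl i => exact lt_irrefl i
  | inr e =>
    rintro (h | ⟨h1, h2⟩)
    · exact h.2 h.1
    · exact lt_irrefl e h2

lemma inj_of_insLT {ι η : Type} [LinearOrder ι] [LinearOrder η] {Lc : η → Set ι}
    {N : ℕ} {f : Fin N → ι ⊕ η} (hf : ∀ x y, x < y → insLT Lc (f x) (f y)) :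
    Function.Injective f := by
  intro x y h
  rcases lt_trichotomy x y with h' | h' | h'
  · exact absurd (h ▸ hf x y h') (insLT_irrefl _ _)
  · exact h'
  · exact absurd (h ▸ hf y x h') (insLT_irrefl _ _)

lemma dedekind_infinite {ι : Type} [LinearOrder ι] {c : Set ι} (hc : IsDedekindCut c) :
    Infinite ι := by
  obtain ⟨hne, -, -, hnomax, -⟩ := hc
  by_contra hfin
  rw [not_infinite_iff_finite] at hfin
  obtain ⟨i, hi, hmax⟩ := Set.Finite.exists_maximalFor id _ (Set.toFinite c) hne
  obtain ⟨j, hj, hij⟩ := hnomax i hi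
  exact absurd (hmax hj hij.le) (not_le.2 hij)

lemma theory_distal (hM : IsGenericHypergraph n M) :
    TheoryMDistalOver (hyperLang (n + 2)) M ∅ (n + 2) := by
  classical
  intro ι α _ b hb part hpart a hyp
  intro N f g hf hg hfS hgS
  haveI hι : Infinite ι := dedekind_infinite (hpart.2.2 0)
  -- the key restricted comparison lemma
  have L1 : ∀ (r : ℕ) (inc : Fin r → Fin N), r ≤ n + 2 → StrictMono inc →
      EqTp (hyperLang (n + 2)) (∅ : Set M)
        (tupcat fun j => Sum.elim b a (f (inc j)))
        (tupcat fun j => Sum.elim b a (g (inc j))) := by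
    intro r inc hr hinc
    obtain ⟨tF, -, htcard⟩ := Set.Infinite.exists_subset_card_eq
      (Set.infinite_univ (α := ι)) r
    set p : Fin r → ι := fun j => tF.orderEmbOfFin htcard j with hp_def
    have hp : StrictMono p := (tF.orderEmbOfFin htcard).strictMono
    have Sf : ∀ h : Fin N → ι ⊕ Fin (n + 3),
        (∀ x y, x < y → insLT (cutSet part) (h x) (h y)) →
        EqTp (hyperLang (n + 2)) (∅ : Set M)
          (tupcat fun j => Sum.elim b a (h (inc j))) (tupcat fun j => b (p j)) := by
      intro h hh
      set Eh : Finset (Fin (n + 3)) :=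
        Finset.univ.filter (fun e => ∃ j : Fin r, h (inc j) = Sum.inr e) with hEh
      have hcard : Eh.card ≤ n + 2 := by
        have h1 : Eh.card ≤ (Finset.univ.image
            (fun j : Fin r => (h (inc j)).elim (fun _ => (none : Option (Fin (n + 3))))
              (fun e => some e))).card := by
          apply Finset.card_le_card_of_injOn (fun e => some e)
          · intro e he
            obtain ⟨j, hj⟩ := (Finset.mem_filter.1 he).2
            refine Finset.mem_image.2 ⟨j, Finset.mem_univ _, ?_⟩
            rw [hj]
            rfl
          · intro e1 _ e2 _ h12
            exact Option.some_injective _ h12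
        have h2 := Finset.card_image_le (s := (Finset.univ : Finset (Fin r)))
          (f := fun j : Fin r => (h (inc j)).elim
            (fun _ => (none : Option (Fin (n + 3)))) (fun e => some e))
        have h3 : (Finset.univ : Finset (Fin r)).card = r := by simp
        omega
      obtain ⟨T, hsubT, -, hTcard⟩ := Finset.exists_subsuperset_card_eq
        (Finset.subset_univ Eh) hcard (by simp)
      have happ := hyp (↑T : Set (Fin (n + 3)))
        (by rw [Set.ncard_coe_finset, hTcard]) r (h ∘ inc) (fun j => Sum.inl (p j))
        (fun x y hxy => hh _ _ (hinc hxy))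
        (fun x y hxy => hp hxy)
        (fun x e hx => hsubT (Finset.mem_filter.2 ⟨Finset.mem_univ _, ⟨x, hx⟩⟩))
        (fun x e hx => by simp at hx)
      exact happ
    exact EqTp_trans (Sf f hf) (EqTp_symm (Sf g hg))
  have key : ∀ (q : ℕ) (w : Fin q → Fin N × α),
      (Finset.image (fun i => (w i).1) Finset.univ).card ≤ n + 2 →
      ∀ φ : (hyperLang (n + 2)).Formula (Fin q),
        (φ.Realize (fun i => Sum.elim b a (f (w i).1) (w i).2) ↔
         φ.Realize (fun i => Sum.elim b a (g (w i).1) (w i).2)) := by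
    intro q w hq φ
    set J := Finset.image (fun i => (w i).1) Finset.univ with hJ
    set iso := J.orderIsoOfFin rfl with hiso
    have hmem : ∀ i, (w i).1 ∈ J := fun i => Finset.mem_image_of_mem _ (Finset.mem_univ i)
    set idx : Fin q → Fin J.card × α :=
      fun i => (iso.symm ⟨(w i).1, hmem i⟩, (w i).2) with hidx_def
    have hincm : StrictMono (fun j : Fin J.card => ((iso j : J) : Fin N)) := by
      intro x y hxy
      exact iso.strictMono hxy
    have hL := L1 J.card (fun j => ((iso j : J) : Fin N)) hq hincm
    have happ := hL 0 (fun i => i.elim0) (fun i => i.elim0)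
      (φ.relabel (fun i => Sum.inl (idx i)))
    rw [Formula.realize_relabel, Formula.realize_relabel] at happ
    have hidx : ∀ i, ((iso (idx i).1 : J) : Fin N) = (w i).1 := by
      intro i
      show ((iso (iso.symm ⟨(w i).1, hmem i⟩) : J) : Fin N) = (w i).1
      rw [OrderIso.apply_symm_apply]
    have e1 : (Sum.elim (tupcat fun j => Sum.elim b a (f ((iso j : J) : Fin N)))
        (fun i : Fin 0 => i.elim0)) ∘ (fun i => Sum.inl (idx i)) =
        fun i => Sum.elim b a (f (w i).1) (w i).2 := by
      funext i
      show Sum.elim b a (f ((iso (idx i).1 : J) : Fin N)) (idx i).2 = _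
      rw [hidx i]
    have e2 : (Sum.elim (tupcat fun j => Sum.elim b a (g ((iso j : J) : Fin N)))
        (fun i : Fin 0 => i.elim0)) ∘ (fun i => Sum.inl (idx i)) =
        fun i => Sum.elim b a (g (w i).1) (w i).2 := by
      funext i
      show Sum.elim b a (g ((iso (idx i).1 : J) : Fin N)) (idx i).2 = _
      rw [hidx i]
    rwa [e1, e2] at happ
  apply match_eqTp hM
  · intro i j
    have h2 : (Finset.image (fun k => ((![i, j] : Fin 2 → Fin N × α) k).1)
        Finset.univ).card ≤ n + 2 := by
      refine le_trans Finset.card_image_le ?_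
      rw [Finset.card_univ, Fintype.card_fin]
      omega
    have := key 2 ![i, j] h2 (Term.equal (Term.var 0) (Term.var 1))
    rw [Formula.realize_equal, Formula.realize_equal] at this
    simpa [tupcat] using this
  · intro w
    have h2 : (Finset.image (fun i => (w i).1) Finset.univ).card ≤ n + 2 := by
      refine le_trans Finset.card_image_le ?_
      rw [Finset.card_univ, Fintype.card_fin]
    have := key (n + 2) w h2
      ((BoundedFormula.rel (⟨rfl⟩ : (hyperLang (n + 2)).Relations (n + 2))
        (fun i => Term.var (Sum.inl i))) : (hyperLang (n + 2)).Formula (Fin (n + 2)))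
    exact this

end Aux2

attribute [local instance] Classical.propDecidable

/-- The generic configuration: a sequence of points all of whose `(n+2)`-subsets are edges,
except for the set of the first `n + 2` points. -/
noncomputable def Pseq (n : ℕ) {M : Type} [St : (hyperLang (n + 2)).Structure M]
    (hM : IsGenericHypergraph n M) : ℕ → M
  | N =>
    (exists_point hM (Finset.image (fun k : Fin N => Pseq n hM k) Finset.univ)
      (fun s => ¬(N = n + 1 ∧
        s = Finset.image (fun k : Fin N => Pseq n hM k) Finset.univ))).choose
termination_by N => N
decreasing_by all_goals exact k.isLt

section Aux3

variable {n : ℕ} [S : (hyperLang (n + 2)).Structure M]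

lemma Pseq_spec (hM : IsGenericHypergraph n M) (N : ℕ) :
    Pseq n hM N ∉ Finset.image (fun k : Fin N => Pseq n hM ↑k) Finset.univ ∧
    ∀ w : Fin (n + 1) → M, Function.Injective w →
      (∀ i, w i ∈ Finset.image (fun k : Fin N => Pseq n hM ↑k) Finset.univ) →
      (Edge (Fin.snoc w (Pseq n hM N)) ↔
        ¬(N = n + 1 ∧ Finset.image w Finset.univ =
          Finset.image (fun k : Fin N => Pseq n hM ↑k) Finset.univ)) := by
  have h : Pseq n hM N = (exists_point hM
      (Finset.image (fun k : Fin N => Pseq n hM ↑k) Finset.univ)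
      (fun s => ¬(N = n + 1 ∧
        s = Finset.image (fun k : Fin N => Pseq n hM ↑k) Finset.univ))).choose := by
    rw [Pseq]
  rw [h]
  exact Exists.choose_spec (exists_point hM
    (Finset.image (fun k : Fin N => Pseq n hM ↑k) Finset.univ)
    (fun s => ¬(N = n + 1 ∧
      s = Finset.image (fun k : Fin N => Pseq n hM ↑k) Finset.univ)))

lemma Pseq_lt_mem (hM : IsGenericHypergraph n M) {a N : ℕ} (h : a < N) :
    Pseq n hM a ∈ Finset.image (fun k : Fin N => Pseq n hM ↑k) Finset.univ :=
  Finset.mem_image.2 ⟨⟨a, h⟩, Finset.mem_univ _, rfl⟩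

lemma Pseq_inj (hM : IsGenericHypergraph n M) : Function.Injective (Pseq n hM) := by
  have key : ∀ a b : ℕ, a < b → Pseq n hM a ≠ Pseq n hM b := by
    intro a b hab heq
    exact (Pseq_spec hM b).1 (heq ▸ Pseq_lt_mem hM hab)
  intro a b h
  rcases lt_trichotomy a b with h' | h' | h'
  · exact absurd h (key a b h')
  · exact h'
  · exact absurd h.symm (key b a h')

lemma Pseq_edge (hM : IsGenericHypergraph n M) (w : Fin (n + 2) → ℕ)
    (hw : Function.Injective w) :
    Edge (fun i => Pseq n hM (w i)) ↔
      Finset.image w Finset.univ ≠ Finset.range (n + 2) := by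
  obtain ⟨j₀, -, hj₀⟩ := Finset.exists_max_image Finset.univ w Finset.univ_nonempty
  set σ := Equiv.swap j₀ (Fin.last (n + 1)) with hσ
  set N := w j₀ with hN
  have hne : ∀ j : Fin (n + 1), σ j.castSucc ≠ j₀ := by
    intro j h
    have h2 := congrArg σ h
    rw [Equiv.swap_apply_self, hσ, Equiv.swap_apply_left] at h2
    exact (Fin.castSucc_lt_last j).ne h2
  have hlt : ∀ j : Fin (n + 1), w (σ j.castSucc) < N := fun j =>
    lt_of_le_of_ne (hj₀ _ (Finset.mem_univ _)) (fun h => hne j (hw h))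
  set wr : Fin (n + 1) → M := fun j => Pseq n hM (w (σ j.castSucc)) with hwr
  have hcomp : (fun i => Pseq n hM (w i)) ∘ σ = Fin.snoc wr (Pseq n hM N) := by
    funext i
    rcases Fin.eq_castSucc_or_eq_last i with ⟨j, rfl⟩ | rfl
    · rw [Function.comp_apply, Fin.snoc_castSucc]
    · rw [Function.comp_apply, Fin.snoc_last, hσ, Equiv.swap_apply_right]
  have h1 : Edge (fun i => Pseq n hM (w i)) ↔ Edge (Fin.snoc wr (Pseq n hM N)) := by
    rw [← hcomp]
    exact (edge_comp_perm hM _ σ).symm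
  have hwrinj : Function.Injective wr := by
    intro x y h
    exact Fin.castSucc_injective _ (σ.injective (hw (Pseq_inj hM h)))
  have h2 := (Pseq_spec hM N).2 wr hwrinj (fun j => Pseq_lt_mem hM (hlt j))
  rw [h1, h2]
  apply not_congr
  have himg_univ : Finset.image w Finset.univ = insert N
      (Finset.image (fun j : Fin (n + 1) => w (σ j.castSucc)) Finset.univ) := by
    ext x
    simp only [Finset.mem_image, Finset.mem_insert, Finset.mem_univ, true_and]
    constructor
    · rintro ⟨i, rfl⟩
      rcases Fin.eq_castSucc_or_eq_last (σ.symm i) with ⟨j, hj⟩ | hj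
      · right
        refine ⟨j, ?_⟩
        rw [← hj, Equiv.apply_symm_apply]
      · left
        have h3 : i = σ (Fin.last (n + 1)) := by rw [← hj, Equiv.apply_symm_apply]
        rw [h3, hσ, Equiv.swap_apply_right]
    · rintro (rfl | ⟨j, rfl⟩)
      · exact ⟨j₀, rfl⟩
      · exact ⟨σ j.castSucc, rfl⟩
  have hPimg : Finset.image (fun k : Fin N => Pseq n hM ↑k) Finset.univ =
      Finset.image (Pseq n hM) (Finset.range N) := by
    ext x
    simp only [Finset.mem_image, Finset.mem_univ, true_and, Finset.mem_range]
    constructor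
    · rintro ⟨k, rfl⟩; exact ⟨↑k, k.isLt, rfl⟩
    · rintro ⟨m, hm, rfl⟩; exact ⟨⟨m, hm⟩, rfl⟩
  have hwrimg : Finset.image wr Finset.univ = Finset.image (Pseq n hM)
      (Finset.image (fun j : Fin (n + 1) => w (σ j.castSucc)) Finset.univ) := by
    rw [Finset.image_image]; rfl
  have hnotmem : N ∉ Finset.image (fun j : Fin (n + 1) => w (σ j.castSucc)) Finset.univ := by
    intro hmem
    obtain ⟨j, -, hj⟩ := Finset.mem_image.1 hmem
    exact absurd hj (ne_of_lt (hlt j))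
  constructor
  · rintro ⟨hN1, himg⟩
    rw [hwrimg, hPimg] at himg
    have himg2 : Finset.image (fun j : Fin (n + 1) => w (σ j.castSucc)) Finset.univ =
        Finset.range N := Finset.image_injective (Pseq_inj hM) himg
    rw [himg_univ, himg2, hN1, ← Finset.range_add_one]
  · intro himg
    have hNmem : N ∈ Finset.range (n + 2) :=
      himg ▸ (Finset.mem_image.2 ⟨j₀, Finset.mem_univ _, rfl⟩)
    have hNle : N ≤ n + 1 := Nat.lt_succ_iff.1 (Finset.mem_range.1 hNmem)
    have hmem2 : n + 1 ∈ Finset.image w Finset.univ := by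
      rw [himg]; exact Finset.mem_range.2 (Nat.lt_succ_self _)
    obtain ⟨j, -, hj⟩ := Finset.mem_image.1 hmem2
    have hN1 : N = n + 1 := le_antisymm hNle (hj ▸ hj₀ j (Finset.mem_univ _))
    refine ⟨hN1, ?_⟩
    have hX : Finset.image (fun j : Fin (n + 1) => w (σ j.castSucc)) Finset.univ =
        Finset.range N := by
      have h3 : insert N (Finset.image (fun j : Fin (n + 1) => w (σ j.castSucc))
          Finset.univ) = Finset.range (n + 2) := by
        rw [← himg_univ, himg]
      have h4 := congrArg (fun t : Finset ℕ => t.erase N) h3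
      simp only [Finset.erase_insert hnotmem] at h4
      rw [h4, hN1, Finset.range_add_one, Finset.erase_insert (by simp)]
    rw [hwrimg, hPimg, hX]

lemma theory_not_distal (hM : IsGenericHypergraph n M) :
    ¬ TheoryMDistalOver (hyperLang (n + 2)) M ∅ (n + 1) := by
  intro H
  haveI : Countable (Lex ((Fin (n + 3)) × ℚ)) :=
    (inferInstance : Countable ((Fin (n + 3)) × ℚ))
  obtain ⟨emb, hemb⟩ := exists_injective_nat (Lex ((Fin (n + 3)) × ℚ))
  set P := Pseq n hM with hP
  set bseq : Lex ((Fin (n + 3)) × ℚ) → Fin 1 → M := fun i _ => P (n + 2 + emb i) with hbseq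
  set aseq : Fin (n + 2) → Fin 1 → M := fun e _ => P ↑e with haseq
  set part : Lex ((Fin (n + 3)) × ℚ) → Fin (n + 3) := fun x => (ofLex x).1 with hpart
  have hmono : Monotone part := by
    intro x y hxy
    rcases Prod.Lex.le_iff.1 hxy with h | ⟨h, -⟩
    · exact le_of_lt h
    · exact le_of_eq h
  have hPne : ∀ w : Fin (n + 2) → ℕ, ¬ Function.Injective w →
      ¬ Edge (fun i => P (w i)) := by
    intro w hwinj hE
    exact hwinj (fun x y h => hM.2.2.1 _ hE (congrArg P h))
  have hPedge : ∀ w : Fin (n + 2) → ℕ,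
      Edge (fun i => P (w i)) ↔ (Function.Injective w ∧
        Finset.image w Finset.univ ≠ Finset.range (n + 2)) := by
    intro w
    by_cases hw : Function.Injective w
    · rw [Pseq_edge hM w hw]
      exact (and_iff_right hw).symm
    · exact iff_of_false (hPne w hw) (fun h => hw h.1)
  have hval : ∀ a b : ℕ, (P a = P b) ↔ a = b :=
    fun a b => ⟨fun h => Pseq_inj hM h, fun h => by rw [h]⟩
  -- indiscernibility of the base sequence
  have hindisc : indiscOver (hyperLang (n + 2)) ∅ bseq := by
    intro N f g hf hg
    have hTf : (tupcat fun j => bseq (f j)) =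
        fun x : Fin N × Fin 1 => P (n + 2 + emb (f x.1)) := rfl
    have hTg : (tupcat fun j => bseq (g j)) =
        fun x : Fin N × Fin 1 => P (n + 2 + emb (g x.1)) := rfl
    rw [hTf, hTg]
    have hrow : ∀ (h' : Fin N → Lex ((Fin (n + 3)) × ℚ)), StrictMono h' →
        ∀ x y : Fin N, (n + 2 + emb (h' x) = n + 2 + emb (h' y)) ↔ x = y := by
      intro h' hh x y
      constructor
      · intro h; exact hh.injective (hemb (by omega))
      · intro h; rw [h]
    apply match_eqTp hM
    · intro x y
      rw [hval, hval, hrow f hf, hrow g hg]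
    · intro w
      have hedge : ∀ (h' : Fin N → Lex ((Fin (n + 3)) × ℚ)), StrictMono h' →
          (Edge ((fun x : Fin N × Fin 1 => P (n + 2 + emb (h' x.1))) ∘ w) ↔
            Function.Injective (fun i => (w i).1)) := by
        intro h' hh
        rw [show ((fun x : Fin N × Fin 1 => P (n + 2 + emb (h' x.1))) ∘ w) =
          (fun i => P (n + 2 + emb (h' ((w i).1)))) from rfl]
        rw [hPedge]
        constructor
        · rintro ⟨hi, -⟩ x y hxy
          have hxy' : (w x).1 = (w y).1 := hxy
          apply hi
          show n + 2 + emb (h' ((w x).1)) = n + 2 + emb (h' ((w y).1))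
          rw [hxy']
        · intro hi
          refine ⟨fun x y h => ?_, ?_⟩
          · have h2 : n + 2 + emb (h' ((w x).1)) = n + 2 + emb (h' ((w y).1)) := h
            exact hi (show (w x).1 = (w y).1 from hh.injective (hemb (by omega)))
          intro hrange
          have h0 : (0 : ℕ) ∈ Finset.range (n + 2) := Finset.mem_range.2 (by omega)
          rw [← hrange] at h0
          obtain ⟨i, -, hi2⟩ := Finset.mem_image.1 h0
          have hi2' : n + 2 + emb (h' ((w i).1)) = 0 := hi2
          omega
      rw [hedge f hf, hedge g hg]
  -- the inserted tuples satisfy the hypothesis of m-distality for all small S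
  have hins : ∀ SS : Set (Fin (n + 2)), SS.ncard = n + 1 →
      InsertsInd (hyperLang (n + 2)) ∅ bseq (cutSet part) aseq SS := by
    intro SS hS N f g hf hg hfS hgS
    set ρ : Lex ((Fin (n + 3)) × ℚ) ⊕ Fin (n + 2) → ℕ :=
      Sum.elim (fun i => n + 2 + emb i) (fun e => ↑e) with hρ
    have hρinj : Function.Injective ρ := by
      rintro (i | e) (j | e') h
      · simp only [ρ, Sum.elim_inl] at h
        exact congrArg Sum.inl (hemb (by omega))
      · exfalso; simp only [ρ, Sum.elim_inl, Sum.elim_inr] at h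
        have := e'.isLt; omega
      · exfalso; simp only [ρ, Sum.elim_inl, Sum.elim_inr] at h
        have := e.isLt; omega
      · simp only [ρ, Sum.elim_inr] at h
        exact congrArg Sum.inr (Fin.val_injective h)
    have hfinj := inj_of_insLT hf
    have hginj := inj_of_insLT hg
    have hTf : (tupcat fun j => Sum.elim bseq aseq (f j)) =
        fun x : Fin N × Fin 1 => P (ρ (f x.1)) := by
      funext x
      rcases hfx : f x.1 with i | e <;>
        simp [tupcat, hfx, ρ, hbseq, haseq]
    have hTg : (tupcat fun j => Sum.elim bseq aseq (g j)) =
        fun x : Fin N × Fin 1 => P (ρ (g x.1)) := by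
      funext x
      rcases hgx : g x.1 with i | e <;>
        simp [tupcat, hgx, ρ, hbseq, haseq]
    rw [hTf, hTg]
    have hcomp_iff : ∀ (h' : Fin N → Lex ((Fin (n + 3)) × ℚ) ⊕ Fin (n + 2)),
        Function.Injective h' → ∀ x y : Fin N, (ρ (h' x) = ρ (h' y)) ↔ x = y := by
      intro h' hinj' x y
      exact ⟨fun h => hinj' (hρinj h), fun h => by rw [h]⟩
    apply match_eqTp hM
    · intro x y
      rw [hval, hval, hcomp_iff f hfinj, hcomp_iff g hginj]
    · intro w
      have hedge : ∀ (h' : Fin N → Lex ((Fin (n + 3)) × ℚ) ⊕ Fin (n + 2)),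
          (∀ x e, h' x = Sum.inr e → e ∈ SS) → Function.Injective h' →
          (Edge ((fun x : Fin N × Fin 1 => P (ρ (h' x.1))) ∘ w) ↔
            Function.Injective (fun i => (w i).1)) := by
        intro h' hS' hinj'
        rw [show ((fun x : Fin N × Fin 1 => P (ρ (h' x.1))) ∘ w) =
          (fun i => P (ρ (h' ((w i).1)))) from rfl]
        rw [hPedge]
        constructor
        · rintro ⟨hi, -⟩ x y hxy
          have hxy' : (w x).1 = (w y).1 := hxy
          apply hi
          show ρ (h' ((w x).1)) = ρ (h' ((w y).1))
          rw [hxy']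
        · intro hi
          refine ⟨fun x y h => hi (show (w x).1 = (w y).1 from
            hinj' (hρinj (show ρ (h' ((w x).1)) = ρ (h' ((w y).1)) from h))), ?_⟩
          intro hrange
          have hsubset : Finset.range (n + 2) ⊆
              Finset.image (fun e : Fin (n + 2) => (e : ℕ)) SS.toFinset := by
            intro x hx
            have hxlt : x < n + 2 := Finset.mem_range.1 hx
            rw [← hrange] at hx
            obtain ⟨i, -, hi2⟩ := Finset.mem_image.1 hx
            rcases hh : h' ((w i).1) with ii | e
            · exfalso
              rw [hh] at hi2
              simp only [ρ, Sum.elim_inl] at hi2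
              omega
            · refine Finset.mem_image.2 ⟨e, ?_, ?_⟩
              · rw [Set.mem_toFinset]
                exact hS' _ _ hh
              · rw [← hi2, hh]
                rfl
          have hcard1 := Finset.card_le_card hsubset
          have hcard2 := Finset.card_image_le
            (f := fun e : Fin (n + 2) => (e : ℕ)) (s := SS.toFinset)
          rw [Finset.card_range] at hcard1
          have hcard3 : SS.toFinset.card = n + 1 := by
            rw [← Set.ncard_eq_toFinset_card']; exact hS
          omega
      rw [hedge f hfS hfinj, hedge g hgS hginj]
  -- the partition is Dedekind
  have hpartD : IsDedekindPartition part := by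
    refine ⟨hmono, fun t => ⟨toLex (t, 0), rfl⟩, fun t => ⟨?_, ?_, ?_, ?_, ?_⟩⟩
    · refine ⟨toLex (t.castSucc, 0), ?_⟩
      show part (toLex (t.castSucc, (0 : ℚ))) ≤ t.castSucc
      exact le_refl _
    · refine ⟨toLex (Fin.last (n + 2), 0), ?_⟩
      show ¬ ((Fin.last (n + 2) : Fin (n + 3)) ≤ t.castSucc)
      exact not_le.2 (Fin.castSucc_lt_last t)
    · intro i hi j hji
      exact le_trans (hmono hji) hi
    · intro i hi
      refine ⟨toLex ((ofLex i).1, (ofLex i).2 + 1), hi, ?_⟩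
      exact Prod.Lex.lt_iff.2 (Or.inr ⟨rfl,
        show (ofLex i).2 < (ofLex i).2 + 1 from lt_add_one _⟩)
    · intro i hi
      refine ⟨toLex ((ofLex i).1, (ofLex i).2 - 1), hi, ?_⟩
      exact Prod.Lex.lt_iff.2 (Or.inr ⟨rfl,
        show (ofLex i).2 - 1 < (ofLex i).2 by linarith⟩)
  -- apply the assumed distality
  have Hfull := H (Lex ((Fin (n + 3)) × ℚ)) (Fin 1) bseq hindisc part hpartD aseq hins
  have hcsmono : ∀ t t' : Fin (n + 2), t < t' → cutSet part t ⊂ cutSet part t' := by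
    intro t t' htt
    constructor
    · intro x hx
      exact le_trans hx (Fin.castSucc_le_castSucc_iff.2 htt.le)
    · intro hsub
      have h5 := hsub (show part (toLex (t'.castSucc, (0 : ℚ))) ≤ t'.castSucc from le_refl _)
      have h6 : t'.castSucc ≤ t.castSucc := h5
      exact absurd (Fin.castSucc_le_castSucc_iff.1 h6) (not_le.2 htt)
  have HEq := Hfull (n + 2) (fun j => Sum.inr j)
    (fun j => Sum.inl (toLex ((0 : Fin (n + 3)), ((j : ℕ) : ℚ))))
    (fun x y h => Or.inl (hcsmono x y h))
    (fun x y h => by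
      show toLex ((0 : Fin (n + 3)), ((x : ℕ) : ℚ)) < toLex (0, ((y : ℕ) : ℚ))
      exact Prod.Lex.lt_iff.2 (Or.inr ⟨rfl,
        show ((x : ℕ) : ℚ) < ((y : ℕ) : ℚ) by exact_mod_cast h⟩))
    (fun x e h => Set.mem_univ _) (fun x e h => Set.mem_univ _)
  have hiff : Edge (fun i : Fin (n + 2) => P ((i : ℕ))) ↔
      Edge (fun i : Fin (n + 2) => P (n + 2 + emb (toLex (0, ((i : ℕ) : ℚ))))) :=
    HEq 0 (fun i => i.elim0) (fun i => i.elim0)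
      ((BoundedFormula.rel (⟨rfl⟩ : (hyperLang (n + 2)).Relations (n + 2))
        (fun i => Term.var (Sum.inl (Sum.inl (i, 0))))) :
          (hyperLang (n + 2)).Formula ((Fin (n + 2) × Fin 1) ⊕ Fin 0))
  have hL : ¬ Edge (fun i : Fin (n + 2) => P ((i : ℕ))) := by
    rw [hPedge]
    rintro ⟨-, hne⟩
    apply hne
    ext x
    simp only [Finset.mem_image, Finset.mem_univ, true_and, Finset.mem_range]
    exact ⟨fun ⟨i, h⟩ => h ▸ i.isLt, fun h => ⟨⟨x, h⟩, rfl⟩⟩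
  have hR : Edge (fun i : Fin (n + 2) => P (n + 2 + emb (toLex (0, ((i : ℕ) : ℚ))))) := by
    rw [hPedge]
    constructor
    · intro x y h
      have h2 : n + 2 + emb (toLex ((0 : Fin (n + 3)), ((x : ℕ) : ℚ))) =
          n + 2 + emb (toLex ((0 : Fin (n + 3)), ((y : ℕ) : ℚ))) := h
      have h3 := hemb (show emb (toLex ((0 : Fin (n + 3)), ((x : ℕ) : ℚ))) =
        emb (toLex ((0 : Fin (n + 3)), ((y : ℕ) : ℚ))) by omega)
      have h4 : ((x : ℕ) : ℚ) = ((y : ℕ) : ℚ) :=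
        congrArg (fun z : Lex ((Fin (n + 3)) × ℚ) => (ofLex z).2) h3
      have h5 : (x : ℕ) = (y : ℕ) := Nat.cast_injective h4
      exact Fin.val_injective h5
    · intro hrange
      have h0 : (0 : ℕ) ∈ Finset.range (n + 2) := Finset.mem_range.2 (by omega)
      rw [← hrange] at h0
      obtain ⟨i, -, hi2⟩ := Finset.mem_image.1 h0
      have hi2' : n + 2 + emb (toLex ((0 : Fin (n + 3)), ((i : ℕ) : ℚ))) = 0 := hi2
      omega
  exact hL (hiff.2 hR)

end Aux3

/-- the theory of the generic `(n+2)`-uniform hypergraph has distality rank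
exactly `n + 2`. -/
theorem stmt17 (n : ℕ) (M : Type) [S : (hyperLang (n + 2)).Structure M]
    (hM : IsGenericHypergraph n M) (hmon : IsMonster (hyperLang (n + 2)) M) :
    TheoryMDistalOver (hyperLang (n + 2)) M ∅ (n + 2) ∧
      ¬ TheoryMDistalOver (hyperLang (n + 2)) M ∅ (n + 1) :=
  ⟨theory_distal hM, theory_not_distal hM⟩

end DR
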